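/- arXiv:2304.13328 — 6 statements merged into one kernel-verified Lean document; each statement's English description precedes it below -/
import Mathlib

section
/- Let E(w,y) = F(w) + (r/2)‖y‖² where F : ℝᵖ → ℝ is locally Lipschitz and path differentiable with conservative gradient D_F, and r > 0. If (w,y) : [0,T] → ℝᵖ × ℝᵖ is an absolutely continuous solution of the differential inclusion ẇ = -r y, ẏ ∈ D_F(w) - y, then E(w(T), y(T)) - E(w(0), y(0)) = -∫₀ᵀ r ‖y(t)‖² dt. -/
open MeasureTheory

/-- Energy decay identity along solutions of the heavy ball differential inclusion
`ẇ = -ry`, `ẏ ∈ D_F(w) - y`, where `D_F` is a conservative gradient for `F`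
(expressed through the chain rule hypothesis along the solution curve `w`). -/
theorem energy_decay_identity {p : ℕ}
    (F : EuclideanSpace ℝ (Fin p) → ℝ)
    (D_F : EuclideanSpace ℝ (Fin p) → Set (EuclideanSpace ℝ (Fin p)))
    (hlip : LocallyLipschitz F)
    (r T : ℝ) (hr : 0 < r) (hT : 0 ≤ T)
    (w y w' y' : ℝ → EuclideanSpace ℝ (Fin p))
    (hw : ∀ t ∈ Set.Icc (0:ℝ) T, HasDerivAt w (w' t) t)
    (hy : ∀ t ∈ Set.Icc (0:ℝ) T, HasDerivAt y (y' t) t)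
    (hw' : ∀ t ∈ Set.Icc (0:ℝ) T, w' t = -(r • y t))
    (hy' : ∀ t ∈ Set.Icc (0:ℝ) T, ∃ v ∈ D_F (w t), y' t = v - y t)
    (hchain : ∀ t ∈ Set.Icc (0:ℝ) T, ∀ v ∈ D_F (w t),
      HasDerivAt (fun s => F (w s)) ((inner ℝ v (w' t) : ℝ)) t) :
    (F (w T) + (r / 2) * ‖y T‖ ^ 2) - (F (w 0) + (r / 2) * ‖y 0‖ ^ 2)
      = -∫ t in (0:ℝ)..T, r * ‖y t‖ ^ 2 := by
  have hI : Set.uIcc (0:ℝ) T = Set.Icc 0 T := Set.uIcc_of_le hT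
  have hE : ∀ t ∈ Set.uIcc (0:ℝ) T,
      HasDerivAt (fun s => F (w s) + (r / 2) * ‖y s‖ ^ 2) (-(r * ‖y t‖ ^ 2)) t := by
    intro t ht
    rw [hI] at ht
    obtain ⟨v, hv, hyv⟩ := hy' t ht
    have h1 := hchain t ht v hv
    have h2 : HasDerivAt (fun s => (inner ℝ (y s) (y s) : ℝ))
        ((inner ℝ (y t) (y' t) : ℝ) + (inner ℝ (y' t) (y t) : ℝ)) t :=
      (hy t ht).inner ℝ (hy t ht)
    have h3 : HasDerivAt (fun s => F (w s) + (r / 2) * (inner ℝ (y s) (y s) : ℝ))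
        ((inner ℝ v (w' t) : ℝ) + (r / 2) * ((inner ℝ (y t) (y' t) : ℝ) + (inner ℝ (y' t) (y t) : ℝ))) t :=
      h1.add (h2.const_mul (r / 2))
    have heq : (fun s => F (w s) + (r / 2) * (inner ℝ (y s) (y s) : ℝ))
        = fun s => F (w s) + (r / 2) * ‖y s‖ ^ 2 := by
      funext s; rw [real_inner_self_eq_norm_sq]
    rw [heq] at h3
    convert h3 using 1
    rw [hw' t ht, hyv]
    simp only [inner_neg_right, inner_smul_right, inner_sub_left, inner_sub_right,
      real_inner_self_eq_norm_sq]
    rw [real_inner_comm (y t) v]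
    ring
  have hcont : ContinuousOn (fun t => -(r * ‖y t‖ ^ 2)) (Set.uIcc (0:ℝ) T) := by
    rw [hI]
    exact (((continuousOn_const.mul
      (((continuousOn_of_forall_continuousAt (fun t ht => (hy t ht).continuousAt)).norm).pow 2)))).neg
  have := intervalIntegral.integral_eq_sub_of_hasDerivAt hE
    (hcont.intervalIntegrable)
  rw [← this, intervalIntegral.integral_neg]
end

section
/- Under the setting of the heavy ball differential inclusion ẇ = -ry, ẏ ∈ D_F(w) - y with F bounded below by F*, any solution (w,y) on [0,T] satisfies ∫₀ᵀ ‖ẇ(t)‖ dt ≤ rT + E(w(0),y(0)) - F*, where E(w,y) = F(w) + (r/2)‖y‖². -/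
open MeasureTheory

/-- Curve length bound for the `w`-component of a solution of the heavy ball
differential inclusion `ẇ = -ry`, `ẏ ∈ D_F(w) - y`, with `F` bounded below by `F*`:
`∫₀ᵀ ‖ẇ(t)‖ dt ≤ rT + E(w(0),y(0)) - F*` where `E(w,y) = F(w) + (r/2)‖y‖²`. -/
theorem curve_length_bound {p : ℕ}
    (F : EuclideanSpace ℝ (Fin p) → ℝ)
    (D_F : EuclideanSpace ℝ (Fin p) → Set (EuclideanSpace ℝ (Fin p)))
    (hlip : LocallyLipschitz F)
    (Fstar : ℝ) (hFstar : ∀ x, Fstar ≤ F x)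
    (r T : ℝ) (hr : 0 < r) (hT : 0 ≤ T)
    (w y w' y' : ℝ → EuclideanSpace ℝ (Fin p))
    (hw : ∀ t ∈ Set.Icc (0:ℝ) T, HasDerivAt w (w' t) t)
    (hy : ∀ t ∈ Set.Icc (0:ℝ) T, HasDerivAt y (y' t) t)
    (hw' : ∀ t ∈ Set.Icc (0:ℝ) T, w' t = -(r • y t))
    (hy' : ∀ t ∈ Set.Icc (0:ℝ) T, ∃ v ∈ D_F (w t), y' t = v - y t)
    (hchain : ∀ t ∈ Set.Icc (0:ℝ) T, ∀ v ∈ D_F (w t),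
      HasDerivAt (fun s => F (w s)) ((inner ℝ v (w' t) : ℝ)) t) :
    ∫ t in (0:ℝ)..T, ‖w' t‖
      ≤ r * T + (F (w 0) + (r / 2) * ‖y 0‖ ^ 2) - Fstar := by
  set g : ℝ → ℝ := fun t => F (w t) + (r / 2) * ‖y t‖ ^ 2 with hg
  -- derivative of the energy
  have hE : ∀ t ∈ Set.Icc (0:ℝ) T, HasDerivAt g (-(r * ‖y t‖ ^ 2)) t := by
    intro t ht
    obtain ⟨v, hv, hyeq⟩ := hy' t ht
    have hF := hchain t ht v hv
    have hI : HasDerivAt (fun s => (inner ℝ (y s) (y s) : ℝ))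
        ((inner ℝ (y t) (y' t) : ℝ) + (inner ℝ (y' t) (y t) : ℝ)) t :=
      (hy t ht).inner ℝ (hy t ht)
    have hI' : HasDerivAt (fun s => (r / 2) * (inner ℝ (y s) (y s) : ℝ))
        ((r / 2) * ((inner ℝ (y t) (y' t) : ℝ) + (inner ℝ (y' t) (y t) : ℝ))) t :=
      hI.const_mul _
    have hsum := hF.add hI'
    have h1 : (inner ℝ v (w' t) : ℝ) = -(r * (inner ℝ v (y t) : ℝ)) := by
      rw [hw' t ht]
      rw [inner_neg_right, real_inner_smul_right]
    have h2 : (inner ℝ (y t) (y' t) : ℝ) = (inner ℝ (y t) v : ℝ) - (inner ℝ (y t) (y t) : ℝ) := by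
      rw [hyeq, inner_sub_right]
    have h3 : (inner ℝ (y' t) (y t) : ℝ) = (inner ℝ v (y t) : ℝ) - (inner ℝ (y t) (y t) : ℝ) := by
      rw [hyeq, inner_sub_left]
    have hcomm : (inner ℝ (y t) v : ℝ) = (inner ℝ v (y t) : ℝ) := real_inner_comm _ _
    have hnorm : (inner ℝ (y t) (y t) : ℝ) = ‖y t‖ ^ 2 := real_inner_self_eq_norm_sq _
    have heq : (inner ℝ v (w' t) : ℝ)
        + (r / 2) * ((inner ℝ (y t) (y' t) : ℝ) + (inner ℝ (y' t) (y t) : ℝ))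
        = -(r * ‖y t‖ ^ 2) := by
      rw [h1, h2, h3, hcomm, hnorm]; ring
    have : HasDerivAt (fun s => F (w s) + (r / 2) * (inner ℝ (y s) (y s) : ℝ))
        (-(r * ‖y t‖ ^ 2)) t := heq ▸ hsum
    convert this using 2 with s
    rw [real_inner_self_eq_norm_sq]
  -- continuity of y on the interval
  have hycont : ContinuousOn y (Set.Icc 0 T) := fun t ht =>
    (hy t ht).continuousAt.continuousWithinAt
  have hIcc : Set.uIcc (0:ℝ) T = Set.Icc 0 T := Set.uIcc_of_le hT
  have hcont2 : ContinuousOn (fun t => -(r * ‖y t‖ ^ 2)) (Set.Icc 0 T) :=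
    (((hycont.norm).pow 2).const_smul r).neg
  have hint2 : IntervalIntegrable (fun t => -(r * ‖y t‖ ^ 2)) volume 0 T :=
    (hcont2.mono (le_of_eq hIcc)).intervalIntegrable
  -- FTC: energy decay
  have hftc : ∫ t in (0:ℝ)..T, -(r * ‖y t‖ ^ 2) = g T - g 0 := by
    apply intervalIntegral.integral_eq_sub_of_hasDerivAt
    · intro t ht; exact hE t (hIcc ▸ ht)
    · exact hint2
  have hintsq : ∫ t in (0:ℝ)..T, r * ‖y t‖ ^ 2 = g 0 - g T := by
    have := hftc
    rw [intervalIntegral.integral_neg] at this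
    linarith
  have hgT : Fstar ≤ g T := by
    have h1 := hFstar (w T)
    have h2 : 0 ≤ (r / 2) * ‖y T‖ ^ 2 := by positivity
    simp only [hg]; linarith
  -- rewrite ‖w'‖ as r‖y‖
  have hcongr : ∫ t in (0:ℝ)..T, ‖w' t‖ = ∫ t in (0:ℝ)..T, r * ‖y t‖ := by
    apply intervalIntegral.integral_congr
    intro t ht
    show ‖w' t‖ = r * ‖y t‖
    rw [hw' t (hIcc ▸ ht), norm_neg, norm_smul, Real.norm_eq_abs, abs_of_pos hr]
  rw [hcongr]
  have hint1 : IntervalIntegrable (fun t => r * ‖y t‖) volume 0 T :=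
    ((hycont.norm.const_smul r).mono (le_of_eq hIcc)).intervalIntegrable
  have hint3 : IntervalIntegrable (fun t => r + r * ‖y t‖ ^ 2) volume 0 T := by
    have : ContinuousOn (fun t => r + r * ‖y t‖ ^ 2) (Set.Icc 0 T) :=
      continuousOn_const.add ((hycont.norm.pow 2).const_smul r)
    exact (this.mono (le_of_eq hIcc)).intervalIntegrable
  have hmono : ∫ t in (0:ℝ)..T, r * ‖y t‖ ≤ ∫ t in (0:ℝ)..T, (r + r * ‖y t‖ ^ 2) := by
    apply intervalIntegral.integral_mono_on hT hint1 hint3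
    intro t ht
    have h0 : (0:ℝ) ≤ ‖y t‖ := norm_nonneg _
    nlinarith [sq_nonneg (‖y t‖ - 1)]
  have hsplit : ∫ t in (0:ℝ)..T, (r + r * ‖y t‖ ^ 2)
      = r * T + (g 0 - g T) := by
    rw [intervalIntegral.integral_add intervalIntegrable_const
      (by
        have : ContinuousOn (fun t => r * ‖y t‖ ^ 2) (Set.Icc 0 T) :=
          (hycont.norm.pow 2).const_smul r
        exact (this.mono (le_of_eq hIcc)).intervalIntegrable)]
    rw [hintsq, intervalIntegral.integral_const, smul_eq_mul]
    ring
  calc ∫ t in (0:ℝ)..T, r * ‖y t‖ ≤ r * T + (g 0 - g T) := by rw [← hsplit]; exact hmono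
    _ ≤ r * T + (F (w 0) + (r / 2) * ‖y 0‖ ^ 2) - Fstar := by
        simp only [hg] at hgT ⊢; linarith
end

section
/- Let D_F be a conservative gradient for a locally Lipschitz function F : ℝᵖ → ℝ bounded below, and r > 0. Then E(w,y) = F(w) + (r/2)‖y‖² is a Lyapunov function for the differential inclusion ẇ = -ry, ẏ ∈ D_F(w) - y with respect to the set Λ = {w : 0 ∈ D_F(w)} × {0}: for every solution (w,y) starting outside Λ and every t > 0, E(w(t),y(t)) < E(w(0),y(0)); and for solutions starting in Λ, E(w(t),y(t)) ≤ E(w(0),y(0)) for all t ≥ 0. -/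
open MeasureTheory

open Set Filter Topology Metric


lemma exists_uniform_lip {g : ℝ → ℝ} {A B : ℝ}
    (hg : ∀ x ∈ Icc A B, ∃ K δ : ℝ, 0 < δ ∧ ∀ u ∈ ball x δ ∩ Icc A B,
      ∀ v ∈ ball x δ ∩ Icc A B, |g v - g u| ≤ K * |v - u|) :
    ∃ L : ℝ, 0 ≤ L ∧ ∀ u ∈ Icc A B, ∀ v ∈ Icc A B, |g v - g u| ≤ L * |v - u| := by
  rcases le_or_gt A B with hAB | hAB
  swap
  · exact ⟨0, le_rfl, fun u hu => absurd (hu.1.trans hu.2) (not_le.2 hAB)⟩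
  classical
  choose! K δ hδ hK using hg
  have hgc : ContinuousOn g (Icc A B) := by
    intro x hx
    rw [Metric.continuousWithinAt_iff]
    intro ε hε
    refine ⟨min (δ x) (ε / (|K x| + 1)), lt_min (hδ x hx) (by positivity), fun {y} hy hyd => ?_⟩
    have h1 : |g y - g x| ≤ K x * |y - x| := by
      refine hK x hx x ⟨mem_ball_self (hδ x hx), hx⟩ y ⟨?_, hy⟩
      exact mem_ball.2 (lt_of_lt_of_le hyd (min_le_left _ _))
    have h2 : |y - x| < ε / (|K x| + 1) := lt_of_lt_of_le (by rwa [Real.dist_eq] at hyd) (min_le_right _ _)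
    calc dist (g y) (g x) = |g y - g x| := Real.dist_eq _ _
      _ ≤ K x * |y - x| := h1
      _ ≤ |K x| * |y - x| := by
          exact mul_le_mul_of_nonneg_right (le_abs_self _) (abs_nonneg _)
      _ < (|K x| + 1) * (ε / (|K x| + 1)) := by
          rcases eq_or_lt_of_le (abs_nonneg (y - x)) with h0 | h0
          · rw [← h0, mul_zero]; positivity
          · calc |K x| * |y - x| < (|K x| + 1) * |y - x| := by nlinarith
              _ ≤ (|K x| + 1) * (ε / (|K x| + 1)) := by nlinarith [abs_nonneg (K x)]
      _ = ε := by field_simp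
  obtain ⟨C, hC⟩ := isCompact_Icc.exists_bound_of_continuousOn hgc
  have hC0 : 0 ≤ C := (norm_nonneg _).trans (hC A ⟨le_rfl, hAB⟩)
  obtain ⟨t, hts, htc⟩ := isCompact_Icc.elim_nhds_subcover (fun x => ball x (δ x / 2))
      (fun x hx => ball_mem_nhds x (half_pos (hδ x hx)))
  have htne : t.Nonempty := by
    rcases mem_iUnion₂.1 (htc ⟨le_rfl, hAB⟩) with ⟨i, hi, _⟩
    exact ⟨i, hi⟩
  set δ₀ := t.inf' htne (fun i => δ i / 2) with hδ₀def
  have hδ₀ : 0 < δ₀ := by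
    rw [hδ₀def, Finset.lt_inf'_iff]
    exact fun i hi => half_pos (hδ i (hts i hi))
  set K₀ := t.sup' htne (fun i => |K i|) with hK₀def
  have hK₀0 : 0 ≤ K₀ := by
    obtain ⟨i, hi⟩ := htne
    exact (abs_nonneg (K i)).trans (Finset.le_sup' (fun j => |K j|) hi)
  refine ⟨max K₀ (2 * C / δ₀), le_max_of_le_left hK₀0, fun u hu v hv => ?_⟩
  rcases lt_or_ge (|v - u|) δ₀ with hlt | hge
  · rcases mem_iUnion₂.1 (htc hu) with ⟨i, hi, hui⟩
    have hδi : δ₀ ≤ δ i / 2 := Finset.inf'_le _ hi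
    have hub : u ∈ ball i (δ i) := by
      rw [mem_ball] at hui ⊢
      linarith [half_pos (hδ i (hts i hi)), hui]
    have hvb : v ∈ ball i (δ i) := by
      rw [mem_ball] at hui ⊢
      calc dist v i ≤ dist v u + dist u i := dist_triangle _ _ _
        _ < δ₀ + δ i / 2 := by rw [Real.dist_eq]; exact add_lt_add hlt hui
        _ ≤ δ i := by linarith
    calc |g v - g u| ≤ K i * |v - u| := hK i (hts i hi) u ⟨hub, hu⟩ v ⟨hvb, hv⟩
      _ ≤ |K i| * |v - u| := mul_le_mul_of_nonneg_right (le_abs_self _) (abs_nonneg _)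
      _ ≤ K₀ * |v - u| := mul_le_mul_of_nonneg_right (Finset.le_sup' (fun j => |K j|) hi) (abs_nonneg _)
      _ ≤ max K₀ (2 * C / δ₀) * |v - u| :=
          mul_le_mul_of_nonneg_right (le_max_left _ _) (abs_nonneg _)
  · have h1 : |g v - g u| ≤ 2 * C := by
      calc |g v - g u| ≤ |g v| + |g u| := abs_sub _ _
        _ ≤ C + C := add_le_add (hC v hv) (hC u hu)
        _ = 2 * C := by ring
    calc |g v - g u| ≤ 2 * C := h1
      _ = (2 * C / δ₀) * δ₀ := by field_simp
      _ ≤ (2 * C / δ₀) * |v - u| := mul_le_mul_of_nonneg_left hge (by positivity)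
      _ ≤ max K₀ (2 * C / δ₀) * |v - u| :=
          mul_le_mul_of_nonneg_right (le_max_right _ _) (abs_nonneg _)



lemma core_antitone {f : ℝ → ℝ} {a b L : ℝ} (hab : a ≤ b) (hL : 0 ≤ L)
    (hlip : ∀ x ∈ Icc a b, ∀ z ∈ Icc a b, |f z - f x| ≤ L * |z - x|)
    {N : Set ℝ} (hN : volume N = 0)
    (hd : ∀ x ∈ Ico a b, x ∉ N → ∃ d ≤ (0:ℝ), HasDerivAt f d x) :
    f b ≤ f a := by
  -- it suffices to prove the bound up to (L+1+(b-a)) * ε for all ε > 0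
  have key : ∀ ε > (0:ℝ), f b ≤ f a + ((L + 1) + (b - a)) * ε := by
    intro ε hε
    obtain ⟨U, hNU, hUopen, hUvol⟩ := Set.exists_isOpen_lt_of_lt N (ENNReal.ofReal ε)
      (by rw [hN]; exact ENNReal.ofReal_pos.2 hε)
    have hUfin : volume U < ⊤ := hUvol.trans_le le_top
    set m : ℝ → ℝ := fun x => (volume (U ∩ Ioc a x)).toReal with hm
    have hmkey : ∀ x z : ℝ, a ≤ x → x ≤ z →
        m z = m x + (volume (U ∩ Ioc x z)).toReal := by
      intro x z hax hxz
      have hsplit : Ioc a z = Ioc a x ∪ Ioc x z := (Set.Ioc_union_Ioc_eq_Ioc hax hxz).symm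
      have hdisj : Disjoint (U ∩ Ioc a x) (U ∩ Ioc x z) :=
        (Set.Ioc_disjoint_Ioc_of_le le_rfl).mono inter_subset_right inter_subset_right
      have : volume (U ∩ Ioc a z) = volume (U ∩ Ioc a x) + volume (U ∩ Ioc x z) := by
        rw [hsplit, inter_union_distrib_left]
        exact measure_union hdisj (hUopen.measurableSet.inter measurableSet_Ioc)
      rw [hm]
      simp only [this]
      rw [ENNReal.toReal_add (ne_of_lt (lt_of_le_of_lt (measure_mono inter_subset_left) hUfin))
        (ne_of_lt (lt_of_le_of_lt (measure_mono inter_subset_left) hUfin))]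
    have hmslope : ∀ x z : ℝ, a ≤ x → x ≤ z →
        0 ≤ m z - m x ∧ m z - m x ≤ z - x := by
      intro x z hax hxz
      rw [hmkey x z hax hxz]
      constructor
      · simp [ENNReal.toReal_nonneg]
      · have : volume (U ∩ Ioc x z) ≤ ENNReal.ofReal (z - x) := by
          calc volume (U ∩ Ioc x z) ≤ volume (Ioc x z) := measure_mono inter_subset_right
            _ = ENNReal.ofReal (z - x) := Real.volume_Ioc
        have := ENNReal.toReal_le_of_le_ofReal (by linarith) this
        linarith
    have hma : m a = 0 := by simp [hm]
    have hmb : m b ≤ ε := by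
      have h1 : volume (U ∩ Ioc a b) ≤ volume U := measure_mono inter_subset_left
      have h2 : volume (U ∩ Ioc a b) < ENNReal.ofReal ε := lt_of_le_of_lt h1 hUvol
      have := ENNReal.toReal_le_of_le_ofReal hε.le h2.le
      simpa [hm] using this
    -- continuity of f and m on [a, b]
    have hfc : ContinuousOn f (Icc a b) := by
      have : LipschitzOnWith L.toNNReal f (Icc a b) := by
        apply LipschitzOnWith.of_dist_le_mul
        intro x hx z hz
        rw [Real.dist_eq, Real.dist_eq, Real.coe_toNNReal L hL]
        exact hlip z hz x hx
      exact this.continuousOn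
    have hmc : ContinuousOn m (Icc a b) := by
      have : LipschitzOnWith 1 m (Icc a b) := by
        apply LipschitzOnWith.of_dist_le_mul
        intro x hx z hz
        rw [Real.dist_eq, Real.dist_eq]
        push_cast
        rw [one_mul]
        rcases le_total x z with h | h
        · obtain ⟨h1, h2⟩ := hmslope x z hx.1 h
          rw [abs_of_nonpos (by linarith), abs_of_nonpos (by linarith)]
          linarith
        · obtain ⟨h1, h2⟩ := hmslope z x hz.1 h
          rw [abs_of_nonneg (by linarith), abs_of_nonneg (by linarith)]
          linarith
      exact this.continuousOn
    set M : ℝ := L + 1 with hM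
    set g : ℝ → ℝ := fun x => f x - M * m x with hg
    set Bd : ℝ → ℝ := fun x => f a + ε * (x - a) with hBd
    have hgc : ContinuousOn g (Icc a b) :=
      hfc.sub (hmc.const_smul M)
    have hres : ∀ x ∈ Icc a b, g x ≤ Bd x := by
      refine image_le_of_liminf_slope_right_le_deriv_boundary (B' := fun _ => ε) hgc ?_ ?_ ?_ ?_
      · -- g a ≤ Bd a
        simp [hg, hBd, hma]
      · -- ContinuousOn Bd
        fun_prop
      · -- right derivative of Bd
        intro x _
        have : HasDerivAt Bd ε x := by
          have := ((hasDerivAt_id x).sub_const a).const_mul ε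
          simpa [hBd, mul_one] using this.const_add (f a)
        exact this.hasDerivWithinAt
      · -- the slope bound
        intro x hx r hr
        by_cases hxN : x ∈ N
        · -- x is in the open set U where m has slope 1
          obtain ⟨δ, hδ, hball⟩ := Metric.isOpen_iff.1 hUopen x (hNU hxN)
          set η := min δ (b - x) with hη
          have hη0 : 0 < η := lt_min hδ (by linarith [hx.2])
          have hsub : Ioo x (x + η) ∈ 𝓝[>] x := Ioo_mem_nhdsGT_of_mem ⟨le_rfl, by linarith⟩
          refine (Filter.eventually_iff_exists_mem.2 ⟨_, hsub, fun z hz => ?_⟩).frequently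
          have hxz : x < z := hz.1
          have hzb : z ≤ b := by
            have h2 : η ≤ b - x := min_le_right _ _
            have h3 : z < x + η := hz.2
            linarith
          have hmz : m z - m x = z - x := by
            have hIoc : Ioc x z ⊆ U := by
              intro u hu
              apply hball
              rw [mem_ball, Real.dist_eq, abs_of_pos (by linarith [hu.1])]
              have : z < x + η := hz.2
              have : u ≤ z := hu.2
              have : η ≤ δ := min_le_left _ _
              linarith [hu.1, hz.2]
            rw [hmkey x z hx.1 hxz.le, inter_eq_right.2 hIoc, Real.volume_Ioc,
              ENNReal.toReal_ofReal (by linarith)]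
            ring
          have hfs : f z - f x ≤ L * (z - x) := by
            have := hlip x ⟨hx.1, hx.2.le⟩ z ⟨by linarith [hx.1], hzb⟩
            calc f z - f x ≤ |f z - f x| := le_abs_self _
              _ ≤ L * |z - x| := this
              _ = L * (z - x) := by rw [abs_of_pos (by linarith)]
          have : slope g x z ≤ -1 := by
            rw [slope_def_field]
            have hz0 : (0:ℝ) < z - x := by linarith
            rw [div_le_iff₀ hz0]
            simp only [hg]
            have : f z - M * m z - (f x - M * m x) = (f z - f x) - M * (m z - m x) := by ring
            rw [this, hmz, hM]
            nlinarith
          calc slope g x z ≤ -1 := this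
            _ < r := by linarith
        · -- x has a derivative ≤ 0
          obtain ⟨d, hd0, hdx⟩ := hd x hx hxN
          have hslope : Tendsto (slope f x) (𝓝[≠] x) (𝓝 d) :=
            hasDerivAt_iff_tendsto_slope.1 hdx
          have hmono : 𝓝[>] x ≤ 𝓝[≠] x :=
            nhdsWithin_mono x fun z (hz : x < z) => ne_of_gt hz
          have h0 : ∀ᶠ z in 𝓝[≠] x, slope f x z < r :=
            hslope.eventually_lt_const (by linarith)
          have h1 : ∀ᶠ z in 𝓝[>] x, slope f x z < r := h0.filter_mono hmono
          have h2 : ∀ᶠ z in 𝓝[>] x, slope g x z < r := by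
            filter_upwards [h1, self_mem_nhdsWithin] with z hz hz'
            have hxz : x < z := hz'
            have hms : 0 ≤ m z - m x := (hmslope x z hx.1 hxz.le).1
            have : slope g x z ≤ slope f x z := by
              rw [slope_def_field, slope_def_field]
              apply (div_le_div_iff_of_pos_right (show (0:ℝ) < z - x by linarith)).2
              have hM0 : 0 ≤ M := by rw [hM]; linarith
              simp only [hg]
              nlinarith
            linarith
          exact h2.frequently
    -- conclude
    have := hres b ⟨hab, le_rfl⟩
    have hmb0 : 0 ≤ m b := by
      have := (hmslope a b le_rfl hab).1
      simpa [hma] using this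
    simp only [hg, hBd] at this
    nlinarith
  -- pass to the limit ε → 0
  by_contra h
  push_neg at h
  set C := (L + 1) + (b - a) with hC
  have hC0 : 0 < C + 1 := by nlinarith
  have hεpos : 0 < (f b - f a) / (2 * (C + 1)) := div_pos (by linarith) (by linarith)
  have hk := key _ hεpos
  have h1 : C * ((f b - f a) / (2 * (C + 1))) ≤ (C + 1) * ((f b - f a) / (2 * (C + 1))) :=
    mul_le_mul_of_nonneg_right (by linarith) hεpos.le
  have h2 : (C + 1) * ((f b - f a) / (2 * (C + 1))) = (f b - f a) / 2 := by
    field_simp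
  nlinarith


/-- The total energy `E(w,y) = F(w) + (r/2)‖y‖²` is a Lyapunov function for the
heavy ball differential inclusion `ẇ = -ry`, `ẏ ∈ D_F(w) - y` with respect to
`Λ = {w : 0 ∈ D_F(w)} × {0}`, where `D_F` is a conservative gradient for the
locally Lipschitz function `F` bounded below. -/
theorem energy_is_lyapunov {p : ℕ}
    (F : EuclideanSpace ℝ (Fin p) → ℝ)
    (D_F : EuclideanSpace ℝ (Fin p) → Set (EuclideanSpace ℝ (Fin p)))
    (hlip : LocallyLipschitz F)
    (Fstar : ℝ) (hFstar : ∀ x, Fstar ≤ F x)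
    (r : ℝ) (hr : 0 < r)
    -- conservative gradient: closed graph, nonempty convex values, locally bounded,
    -- and the chain rule along (differentiable) curves
    (hclosed : IsClosed {q : EuclideanSpace ℝ (Fin p) × EuclideanSpace ℝ (Fin p) | q.2 ∈ D_F q.1})
    (hne : ∀ x, (D_F x).Nonempty)
    (hconv : ∀ x, Convex ℝ (D_F x))
    (hlb : ∀ K : Set (EuclideanSpace ℝ (Fin p)), IsCompact K →
      ∃ M, ∀ x ∈ K, ∀ v ∈ D_F x, ‖v‖ ≤ M)
    (hchain : ∀ γ γ' : ℝ → EuclideanSpace ℝ (Fin p), (∀ t, HasDerivAt γ (γ' t) t) →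
      ∀ᵐ t ∂(volume : Measure ℝ), ∀ v ∈ D_F (γ t),
        HasDerivAt (fun s => F (γ s)) ((inner ℝ v (γ' t) : ℝ)) t) :
    ∀ w y w' y' : ℝ → EuclideanSpace ℝ (Fin p),
      (∀ t ∈ Set.Ici (0:ℝ), HasDerivAt w (w' t) t ∧ HasDerivAt y (y' t) t ∧
        w' t = -(r • y t) ∧ ∃ v ∈ D_F (w t), y' t = v - y t) →
      ((¬ (0 ∈ D_F (w 0) ∧ y 0 = 0)) →
        ∀ t > (0:ℝ), F (w t) + (r / 2) * ‖y t‖ ^ 2 < F (w 0) + (r / 2) * ‖y 0‖ ^ 2) ∧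
      ((0 ∈ D_F (w 0) ∧ y 0 = 0) →
        ∀ t ≥ (0:ℝ), F (w t) + (r / 2) * ‖y t‖ ^ 2 ≤ F (w 0) + (r / 2) * ‖y 0‖ ^ 2) := by
  intro w y w' y' hsol
  set E : ℝ → ℝ := fun t => F (w t) + (r / 2) * ‖y t‖ ^ 2 with hEdef
  have hw : ∀ t : ℝ, 0 ≤ t → HasDerivAt w (w' t) t := fun t ht => (hsol t ht).1
  have hy : ∀ t : ℝ, 0 ≤ t → HasDerivAt y (y' t) t := fun t ht => (hsol t ht).2.1
  have hw' : ∀ t : ℝ, 0 ≤ t → w' t = -(r • y t) := fun t ht => (hsol t ht).2.2.1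
  have hvex : ∀ t : ℝ, 0 ≤ t → ∃ v ∈ D_F (w t), y' t = v - y t := fun t ht => (hsol t ht).2.2.2
  set γ : ℝ → EuclideanSpace ℝ (Fin p) := fun s => w (Real.exp s) with hγdef
  set γ' : ℝ → EuclideanSpace ℝ (Fin p) := fun s => Real.exp s • w' (Real.exp s) with hγ'def
  have hγ : ∀ s, HasDerivAt γ (γ' s) s := by
    intro s
    have h := HasDerivAt.scomp (h := Real.exp) (x := s)
      (hw _ (Real.exp_pos s).le) (Real.hasDerivAt_exp s)
    exact h
  have hae := hchain γ γ' hγ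
  set N : Set ℝ := {s : ℝ | ¬ ∀ v ∈ D_F (γ s),
      HasDerivAt (fun u => F (γ u)) ((inner ℝ v (γ' s) : ℝ)) s} with hNdef
  have hNnull : volume N = 0 := ae_iff.1 hae
  -- derivative of E ∘ exp off N
  have hEd : ∀ s : ℝ, s ∉ N →
      HasDerivAt (fun u => E (Real.exp u)) (-(r * Real.exp s * ‖y (Real.exp s)‖ ^ 2)) s := by
    intro s hs
    simp only [hNdef, mem_setOf_eq, not_not] at hs
    obtain ⟨v, hvD, hvy⟩ := hvex (Real.exp s) (Real.exp_pos s).le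
    have h1 : HasDerivAt (fun u => F (γ u)) ((inner ℝ v (γ' s) : ℝ)) s := hs v hvD
    have hY : HasDerivAt (fun u => y (Real.exp u)) (Real.exp s • y' (Real.exp s)) s := by
      have h := HasDerivAt.scomp (h := Real.exp) (x := s)
        (hy _ (Real.exp_pos s).le) (Real.hasDerivAt_exp s)
      exact h
    have h2 := (hY.inner ℝ hY).const_mul (r / 2)
    have hcomb := h1.add h2
    have heq : (fun u => F (γ u) + (r / 2) *
        (inner ℝ (y (Real.exp u)) (y (Real.exp u)) : ℝ)) = fun u => E (Real.exp u) := by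
      funext u
      simp only [hEdef, hγdef, real_inner_self_eq_norm_sq]
    simp only [Pi.add_def] at hcomb
    rw [heq] at hcomb
    refine hcomb.congr_deriv ?_
    rw [hγ'def]
    simp only [hw' (Real.exp s) (Real.exp_pos s).le, hvy]
    simp only [inner_smul_right, inner_neg_right, inner_sub_right, inner_sub_left,
      inner_smul_left, real_inner_smul_right, real_inner_self_eq_norm_sq,
      RCLike.conj_to_real]
    rw [real_inner_comm (y (Real.exp s)) v]
    ring
  have hwC : ∀ t : ℝ, 0 ≤ t → ContinuousAt w t := fun t ht => (hw t ht).continuousAt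
  have hyC : ∀ t : ℝ, 0 ≤ t → ContinuousAt y t := fun t ht => (hy t ht).continuousAt
  -- E is Lipschitz on [0, T]
  have hElip : ∀ T : ℝ, 0 < T →
      ∃ L, 0 ≤ L ∧ ∀ u ∈ Icc (0:ℝ) T, ∀ v ∈ Icc (0:ℝ) T, |E v - E u| ≤ L * |v - u| := by
    intro T hT
    have hycont : ContinuousOn y (Icc 0 T) := fun t ht => (hyC t ht.1).continuousWithinAt
    have hwcont : ContinuousOn w (Icc 0 T) := fun t ht => (hwC t ht.1).continuousWithinAt
    obtain ⟨Cy, hCy⟩ := isCompact_Icc.exists_bound_of_continuousOn hycont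
    have hCy0 : 0 ≤ Cy := (norm_nonneg _).trans (hCy 0 ⟨le_rfl, hT.le⟩)
    have hwlip : ∀ u ∈ Icc (0:ℝ) T, ∀ v ∈ Icc (0:ℝ) T, ‖w v - w u‖ ≤ (r * Cy) * |v - u| := by
      intro u hu v hv
      have := Convex.norm_image_sub_le_of_norm_hasDerivWithin_le (f := w) (f' := w')
        (fun x hx => (hw x hx.1).hasDerivWithinAt)
        (fun x hx => by
          rw [hw' x hx.1, norm_neg, norm_smul, Real.norm_eq_abs, abs_of_pos hr]
          exact mul_le_mul_of_nonneg_left (hCy x hx) hr.le)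
        (convex_Icc 0 T) hu hv
      rwa [Real.norm_eq_abs] at this
    have hK : IsCompact (w '' Icc 0 T) := isCompact_Icc.image_of_continuousOn hwcont
    obtain ⟨Mv, hMv⟩ := hlb _ hK
    have hMv0 : 0 ≤ Mv := by
      obtain ⟨v₀, hv₀⟩ := hne (w 0)
      exact (norm_nonneg v₀).trans (hMv (w 0) ⟨0, ⟨le_rfl, hT.le⟩, rfl⟩ v₀ hv₀)
    have hylip : ∀ u ∈ Icc (0:ℝ) T, ∀ v ∈ Icc (0:ℝ) T, ‖y v - y u‖ ≤ (Mv + Cy) * |v - u| := by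
      intro u hu v hv
      have := Convex.norm_image_sub_le_of_norm_hasDerivWithin_le (f := y) (f' := y')
        (fun x hx => (hy x hx.1).hasDerivWithinAt)
        (fun x hx => by
          obtain ⟨vx, hvxD, hvxy⟩ := hvex x hx.1
          rw [hvxy]
          calc ‖vx - y x‖ ≤ ‖vx‖ + ‖y x‖ := norm_sub_le _ _
            _ ≤ Mv + Cy := add_le_add (hMv (w x) ⟨x, hx, rfl⟩ vx hvxD) (hCy x hx))
        (convex_Icc 0 T) hu hv
      rwa [Real.norm_eq_abs] at this
    apply exists_uniform_lip
    intro t₀ ht₀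
    obtain ⟨KF, sF, hsnb, hFs⟩ := hlip (w t₀)
    obtain ⟨ρ, hρ, hball⟩ := Metric.mem_nhds_iff.1 hsnb
    refine ⟨(KF : ℝ) * (r * Cy) + r * Cy * (Mv + Cy), ρ / (r * Cy + 1), by positivity, ?_⟩
    intro u hu v hv
    have hmem : ∀ z ∈ ball t₀ (ρ / (r * Cy + 1)) ∩ Icc (0:ℝ) T, w z ∈ sF := by
      intro z hz
      apply hball
      rw [mem_ball, dist_eq_norm]
      calc ‖w z - w t₀‖ ≤ (r * Cy) * |z - t₀| := hwlip t₀ ht₀ z hz.2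
        _ < (r * Cy + 1) * (ρ / (r * Cy + 1)) := by
            have h1 : |z - t₀| < ρ / (r * Cy + 1) := by
              have := hz.1; rwa [mem_ball, Real.dist_eq] at this
            have h2 : 0 ≤ r * Cy := by positivity
            nlinarith [abs_nonneg (z - t₀)]
        _ = ρ := by field_simp
    have hF1 : |F (w v) - F (w u)| ≤ (KF : ℝ) * (r * Cy) * |v - u| := by
      have := hFs.dist_le_mul (w v) (hmem v hv) (w u) (hmem u hu)
      rw [Real.dist_eq, dist_eq_norm] at this
      calc |F (w v) - F (w u)| ≤ (KF : ℝ) * ‖w v - w u‖ := this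
        _ ≤ (KF : ℝ) * ((r * Cy) * |v - u|) :=
            mul_le_mul_of_nonneg_left (hwlip u hu.2 v hv.2) KF.coe_nonneg
        _ = (KF : ℝ) * (r * Cy) * |v - u| := by ring
    have hF2 : |(r / 2) * ‖y v‖ ^ 2 - (r / 2) * ‖y u‖ ^ 2| ≤ r * Cy * (Mv + Cy) * |v - u| := by
      have h1 : |‖y v‖ - ‖y u‖| ≤ ‖y v - y u‖ := abs_norm_sub_norm_le _ _
      have h2 : ‖y v - y u‖ ≤ (Mv + Cy) * |v - u| := hylip u hu.2 v hv.2
      have h3 : ‖y v‖ ≤ Cy := hCy v hv.2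
      have h4 : ‖y u‖ ≤ Cy := hCy u hu.2
      have h5 : (r / 2) * ‖y v‖ ^ 2 - (r / 2) * ‖y u‖ ^ 2
          = (r / 2) * ((‖y v‖ + ‖y u‖) * (‖y v‖ - ‖y u‖)) := by ring
      rw [h5, abs_mul, abs_of_pos (by positivity : (0:ℝ) < r / 2), abs_mul]
      have h6 : |‖y v‖ + ‖y u‖| ≤ 2 * Cy := by
        rw [abs_of_nonneg (by positivity)]; linarith
      calc (r / 2) * (|‖y v‖ + ‖y u‖| * |‖y v‖ - ‖y u‖|)
          ≤ (r / 2) * ((2 * Cy) * ((Mv + Cy) * |v - u|)) := by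
            apply mul_le_mul_of_nonneg_left ?_ (by positivity)
            exact mul_le_mul h6 (h1.trans h2) (abs_nonneg _) (by positivity)
        _ = r * Cy * (Mv + Cy) * |v - u| := by ring
    calc |E v - E u| = |(F (w v) - F (w u)) + ((r / 2) * ‖y v‖ ^ 2 - (r / 2) * ‖y u‖ ^ 2)| := by
          simp only [hEdef]; ring_nf
      _ ≤ |F (w v) - F (w u)| + |(r / 2) * ‖y v‖ ^ 2 - (r / 2) * ‖y u‖ ^ 2| := abs_add_le _ _
      _ ≤ (KF : ℝ) * (r * Cy) * |v - u| + r * Cy * (Mv + Cy) * |v - u| := add_le_add hF1 hF2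
      _ = ((KF : ℝ) * (r * Cy) + r * Cy * (Mv + Cy)) * |v - u| := by ring
  -- main monotonicity along exp-reparametrized time
  have hmain : ∀ a b : ℝ, a ≤ b → E (Real.exp b) ≤ E (Real.exp a) := by
    intro a b hab
    obtain ⟨L, hL0, hL⟩ := hElip (Real.exp b) (Real.exp_pos b)
    have hexplip : ∀ x ∈ Icc a b, ∀ z ∈ Icc a b,
        |Real.exp z - Real.exp x| ≤ Real.exp b * |z - x| := by
      intro x hx z hz
      have := Convex.norm_image_sub_le_of_norm_hasDerivWithin_le
        (f := Real.exp) (C := Real.exp b)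
        (fun u _ => (Real.hasDerivAt_exp u).hasDerivWithinAt)
        (fun u hu => by
          rw [Real.norm_eq_abs, abs_of_pos (Real.exp_pos u)]
          exact Real.exp_le_exp.2 hu.2)
        (convex_Icc a b) hx hz
      rwa [Real.norm_eq_abs, Real.norm_eq_abs] at this
    refine core_antitone (f := fun s => E (Real.exp s)) (a := a) (b := b) hab
      (L := L * Real.exp b) (by positivity) ?_ hNnull ?_
    · intro x hx z hz
      have hxm : Real.exp x ∈ Icc (0:ℝ) (Real.exp b) :=
        ⟨(Real.exp_pos x).le, Real.exp_le_exp.2 hx.2⟩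
      have hzm : Real.exp z ∈ Icc (0:ℝ) (Real.exp b) :=
        ⟨(Real.exp_pos z).le, Real.exp_le_exp.2 hz.2⟩
      calc |E (Real.exp z) - E (Real.exp x)| ≤ L * |Real.exp z - Real.exp x| :=
            hL _ hxm _ hzm
        _ ≤ L * (Real.exp b * |z - x|) :=
            mul_le_mul_of_nonneg_left (hexplip x hx z hz) hL0
        _ = L * Real.exp b * |z - x| := by ring
    · intro x _ hxN
      refine ⟨-(r * Real.exp x * ‖y (Real.exp x)‖ ^ 2), ?_, hEd x hxN⟩
      refine neg_nonpos.2 (mul_nonneg (mul_nonneg hr.le (Real.exp_pos x).le) (sq_nonneg _))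
  have hanti : ∀ u t : ℝ, 0 < u → u ≤ t → E t ≤ E u := by
    intro u t hu hut
    have := hmain (Real.log u) (Real.log t) (Real.log_le_log hu hut)
    rwa [Real.exp_log hu, Real.exp_log (hu.trans_le hut)] at this
  have hEcont : ∀ t : ℝ, 0 ≤ t → ContinuousAt E t := by
    intro t ht
    exact ((hlip.continuous.continuousAt).comp (hwC t ht)).add
      (continuousAt_const.mul (((hyC t ht).norm).pow 2))
  have hE0 : ∀ t : ℝ, 0 ≤ t → E t ≤ E 0 := by
    intro t ht
    rcases eq_or_lt_of_le ht with h | h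
    · exact le_of_eq (by rw [← h])
    · have htend : Tendsto E (𝓝[>] (0:ℝ)) (𝓝 (E 0)) :=
        ((hEcont 0 le_rfl).tendsto).mono_left nhdsWithin_le_nhds
      refine ge_of_tendsto htend ?_
      filter_upwards [Ioo_mem_nhdsGT_of_mem (⟨le_rfl, h⟩ : (0:ℝ) ∈ Ico 0 t)] with u hu
      exact hanti u t hu.1 hu.2.le
  constructor
  · -- strict decrease outside Λ
    intro hΛ t ht
    by_contra hcon
    push_neg at hcon
    have hEt : E t = E 0 := le_antisymm (hE0 t ht.le) hcon
    -- E is constant equal to E 0 on (0, t)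
    have hconst : ∀ u : ℝ, 0 < u → u < t → E u = E 0 := by
      intro u hu hut
      have h1 : E u ≤ E 0 := hE0 u hu.le
      have h2 : E t ≤ E u := hanti u t hu hut.le
      linarith [hEt.ge, hEt.le]
    -- y vanishes on (0, t)
    have yzero : ∀ u : ℝ, 0 < u → u < t → y u = 0 := by
      intro u hu hut
      have hYc : ContinuousAt (fun s => y (Real.exp s)) (Real.log u) := by
        apply ContinuousAt.comp ?_ Real.continuous_exp.continuousAt
        rw [Real.exp_log hu]
        exact hyC u hu.le
      rw [← norm_le_zero_iff]
      refine le_of_forall_pos_le_add ?_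
      intro ε hε
      rw [Metric.continuousAt_iff] at hYc
      obtain ⟨δ, hδ, hYδ⟩ := hYc ε hε
      set δ' : ℝ := min δ (Real.log t - Real.log u) with hδ'def
      have hδ'pos : 0 < δ' := lt_min hδ (by
        have := Real.log_lt_log hu hut
        linarith)
      -- pick a good point s in (log u - δ', log u)
      have hnotsub : ¬ (Ioo (Real.log u - δ') (Real.log u) ⊆ N) := by
        intro hsub
        have h1 := measure_mono (μ := (volume : Measure ℝ)) hsub
        rw [hNnull] at h1
        have h2 : volume (Ioo (Real.log u - δ') (Real.log u)) = ENNReal.ofReal δ' := by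
          rw [Real.volume_Ioo]; ring_nf
        rw [h2] at h1
        exact absurd (le_antisymm h1 (by positivity)) (ne_of_gt (ENNReal.ofReal_pos.2 hδ'pos))
      obtain ⟨s, hsIoo, hsN⟩ := not_subset.1 hnotsub
      -- E ∘ exp is constant near s, so its derivative vanishes there
      have hsconst : HasDerivAt (fun u => E (Real.exp u)) 0 s := by
        have hmem : Iio (Real.log t) ∈ 𝓝 s := by
          apply Iio_mem_nhds
          calc s < Real.log u := hsIoo.2
            _ ≤ Real.log t := (Real.log_le_log hu hut.le)
        have : (fun u => E (Real.exp u)) =ᶠ[𝓝 s] fun _ => E 0 := by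
          filter_upwards [hmem] with σ hσ
          have h1 : Real.exp σ < t := by
            calc Real.exp σ < Real.exp (Real.log t) := Real.exp_lt_exp.2 hσ
              _ = t := Real.exp_log (hu.trans hut)
          exact hconst (Real.exp σ) (Real.exp_pos σ) h1
        exact (hasDerivAt_const s (E 0)).congr_of_eventuallyEq this
      have hsderiv := hEd s hsN
      have h0 := hsderiv.unique hsconst
      have hy0 : y (Real.exp s) = 0 := by
        have he := Real.exp_pos s
        have h1 : r * Real.exp s * ‖y (Real.exp s)‖ ^ 2 = 0 := by linarith
        have h2 : (0:ℝ) < r * Real.exp s := mul_pos hr he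
        have h3 : ‖y (Real.exp s)‖ ^ 2 = 0 := (mul_eq_zero.1 h1).resolve_left (ne_of_gt h2)
        rwa [pow_eq_zero_iff (by norm_num), norm_eq_zero] at h3
      have hsd : dist s (Real.log u) < δ := by
        rw [Real.dist_eq, abs_of_neg (by linarith [hsIoo.2])]
        have := hsIoo.1
        have hδ'le : δ' ≤ δ := min_le_left _ _
        linarith
      have hYd : dist (y (Real.exp s)) (y (Real.exp (Real.log u))) < ε := hYδ hsd
      rw [Real.exp_log hu, hy0, dist_comm, dist_zero_right] at hYd
      linarith
    have y0 : y 0 = 0 := by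
      rw [← norm_le_zero_iff]
      refine le_of_forall_pos_le_add ?_
      intro ε hε
      obtain ⟨δ, hδ, hyδ⟩ := Metric.continuousAt_iff.1 (hyC 0 le_rfl) ε hε
      set u : ℝ := min (δ / 2) (t / 2) with hudef
      have hu0 : 0 < u := lt_min (by linarith) (by linarith)
      have hud : dist u 0 < δ := by
        rw [Real.dist_eq, sub_zero, abs_of_pos hu0]
        calc u ≤ δ / 2 := min_le_left _ _
          _ < δ := by linarith
      have hyd := hyδ hud
      have hut : u < t := by
        calc u ≤ t / 2 := min_le_right _ _
          _ < t := by linarith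
      rw [yzero u hu0 hut, dist_comm, dist_zero_right] at hyd
      linarith
    have hyIcc : ∀ u ∈ Icc (0:ℝ) (t / 2), y u = 0 := by
      intro u hu
      rcases eq_or_lt_of_le hu.1 with h | h
      · rw [← h]; exact y0
      · exact yzero u h (by linarith [hu.2])
    have hderiv0 : y' 0 = 0 := by
      have hUD : UniqueDiffWithinAt ℝ (Icc (0:ℝ) (t / 2)) 0 :=
        (uniqueDiffOn_Icc (by linarith : (0:ℝ) < t / 2)) 0 ⟨le_rfl, by linarith⟩
      have h1 : HasDerivWithinAt y (y' 0) (Icc (0:ℝ) (t / 2)) 0 :=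
        (hy 0 le_rfl).hasDerivWithinAt
      have h2 : HasDerivWithinAt y 0 (Icc (0:ℝ) (t / 2)) 0 := by
        have hc : HasDerivWithinAt (fun _ : ℝ => (0 : EuclideanSpace ℝ (Fin p))) 0
            (Icc (0:ℝ) (t / 2)) 0 := hasDerivWithinAt_const _ _ _
        exact hc.congr (fun u hu => hyIcc u hu) (hyIcc 0 ⟨le_rfl, by linarith⟩)
      rw [← h1.derivWithin hUD, h2.derivWithin hUD]
    obtain ⟨v, hvD, hvy⟩ := hvex 0 le_rfl
    apply hΛ
    rw [hderiv0, y0, sub_zero] at hvy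
    exact ⟨hvy ▸ hvD, y0⟩
  · intro _ t ht
    exact hE0 t ht
end

section
/- Let (w,y) be a solution of ẇ = -ry, ẏ ∈ D_F(w) - y with y(0) = 0 and suppose there exists t > 0 with E(w(t),y(t)) = E(w(0),y(0)), where E(w,y) = F(w) + (r/2)‖y‖². Then y(s) = 0 for all s ∈ [0,t], and consequently 0 ∈ D_F(w(0)). -/
open MeasureTheory

/-- If a solution of `ẇ = -ry`, `ẏ ∈ D_F(w) - y` starts with `y(0) = 0` and the
energy `E(w,y) = F(w) + (r/2)‖y‖²` is conserved up to some time `t > 0`, then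
`y ≡ 0` on `[0,t]` and `0 ∈ D_F(w(0))`. -/
theorem energy_conservation_implies_critical {p : ℕ}
    (F : EuclideanSpace ℝ (Fin p) → ℝ)
    (D_F : EuclideanSpace ℝ (Fin p) → Set (EuclideanSpace ℝ (Fin p)))
    (hlip : LocallyLipschitz F)
    (r : ℝ) (hr : 0 < r)
    (hclosed : IsClosed {q : EuclideanSpace ℝ (Fin p) × EuclideanSpace ℝ (Fin p) | q.2 ∈ D_F q.1})
    (t : ℝ) (ht : 0 < t)
    (w y w' y' : ℝ → EuclideanSpace ℝ (Fin p))
    (hw : ∀ s ∈ Set.Icc (0:ℝ) t, HasDerivAt w (w' s) s)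
    (hy : ∀ s ∈ Set.Icc (0:ℝ) t, HasDerivAt y (y' s) s)
    (hw' : ∀ s ∈ Set.Icc (0:ℝ) t, w' s = -(r • y s))
    (hy' : ∀ s ∈ Set.Icc (0:ℝ) t, ∃ v ∈ D_F (w s), y' s = v - y s)
    (hchain : ∀ s ∈ Set.Icc (0:ℝ) t, ∀ v ∈ D_F (w s),
      HasDerivAt (fun τ => F (w τ)) ((inner ℝ v (w' s) : ℝ)) s)
    (hy0 : y 0 = 0)
    (hE : F (w t) + (r / 2) * ‖y t‖ ^ 2 = F (w 0) + (r / 2) * ‖y 0‖ ^ 2) :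
    (∀ s ∈ Set.Icc (0:ℝ) t, y s = 0) ∧ 0 ∈ D_F (w 0) := by
  set E : ℝ → ℝ := fun s => F (w s) + (r / 2) * ‖y s‖ ^ 2 with hEdef
  -- derivative of energy
  have hE' : ∀ s ∈ Set.Icc (0:ℝ) t, HasDerivAt E (-(r * ‖y s‖ ^ 2)) s := by
    intro s hs
    obtain ⟨v, hv, hyv⟩ := hy' s hs
    have h1 : HasDerivAt (fun τ => F (w τ)) ((inner ℝ v (w' s) : ℝ)) s := hchain s hs v hv
    have h2 : HasDerivAt (fun τ => (inner ℝ (y τ) (y τ) : ℝ))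
        ((inner ℝ (y s) (y' s) : ℝ) + (inner ℝ (y' s) (y s) : ℝ)) s :=
      (hy s hs).inner ℝ (hy s hs)
    have h3 : HasDerivAt (fun τ => ‖y τ‖ ^ 2)
        ((inner ℝ (y s) (y' s) : ℝ) + (inner ℝ (y' s) (y s) : ℝ)) s := by
      refine h2.congr_of_eventuallyEq ?_
      filter_upwards with τ
      rw [real_inner_self_eq_norm_sq]
    have h4 : HasDerivAt E
        ((inner ℝ v (w' s) : ℝ) + (r / 2) *
          ((inner ℝ (y s) (y' s) : ℝ) + (inner ℝ (y' s) (y s) : ℝ))) s :=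
      h1.add (h3.const_mul (r / 2))
    have key : (inner ℝ v (w' s) : ℝ) + (r / 2) *
        ((inner ℝ (y s) (y' s) : ℝ) + (inner ℝ (y' s) (y s) : ℝ)) = -(r * ‖y s‖ ^ 2) := by
      rw [hw' s hs, hyv, inner_neg_right, real_inner_smul_right,
        inner_sub_right, inner_sub_left, real_inner_self_eq_norm_sq,
        real_inner_comm (y s) v]
      ring
    rwa [key] at h4
  have hEcont : ContinuousOn E (Set.Icc 0 t) := fun s hs =>
    (hE' s hs).continuousAt.continuousWithinAt
  -- E is antitone on [0,t]
  have hanti : AntitoneOn E (Set.Icc 0 t) := by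
    refine antitoneOn_of_deriv_nonpos (convex_Icc 0 t) hEcont ?_ ?_
    · intro s hs
      rw [interior_Icc] at hs
      exact (hE' s (Set.mem_Icc_of_Ioo hs)).differentiableAt.differentiableWithinAt
    · intro s hs
      rw [interior_Icc] at hs
      rw [(hE' s (Set.mem_Icc_of_Ioo hs)).deriv]
      nlinarith [sq_nonneg ‖y s‖]
  -- hence E is constant
  have hEt0 : E t = E 0 := hE
  have hEconst : ∀ s ∈ Set.Icc (0:ℝ) t, E s = E 0 := by
    intro s hs
    have h1 : E s ≤ E 0 := hanti (Set.left_mem_Icc.2 ht.le) hs hs.1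
    have h2 : E t ≤ E s := hanti hs (Set.right_mem_Icc.2 ht.le) hs.2
    linarith
  -- y vanishes on the open interval
  have hyIoo : ∀ s ∈ Set.Ioo (0:ℝ) t, y s = 0 := by
    intro s hs
    have hmem : Set.Ioo (0:ℝ) t ∈ nhds s := Ioo_mem_nhds hs.1 hs.2
    have hconst : HasDerivAt E 0 s := by
      refine (hasDerivAt_const s (E 0)).congr_of_eventuallyEq ?_
      filter_upwards [hmem] with τ hτ
      exact hEconst τ (Set.mem_Icc_of_Ioo hτ)
    have := (hE' s (Set.mem_Icc_of_Ioo hs)).unique hconst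
    have hnorm : ‖y s‖ ^ 2 = 0 := by
      have := this
      nlinarith
    have : ‖y s‖ = 0 := by nlinarith [norm_nonneg (y s)]
    simpa using this
  -- y vanishes on all of [0,t]
  have hyIcc : ∀ s ∈ Set.Icc (0:ℝ) t, y s = 0 := by
    intro s hs
    rcases eq_or_lt_of_le hs.1 with h0 | h0
    · rw [← h0]; exact hy0
    rcases eq_or_lt_of_le hs.2 with h1 | h1
    · -- s = t : use continuity from the left
      subst h1
      have hcont : ContinuousWithinAt y (Set.Ioo 0 s) s :=
        (hy s hs).continuousAt.continuousWithinAt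
      have hne : (nhdsWithin s (Set.Ioo (0:ℝ) s)).NeBot := by
        apply mem_closure_iff_nhdsWithin_neBot.1
        rw [closure_Ioo h0.ne]
        exact Set.right_mem_Icc.2 h0.le
      have hev : ∀ᶠ τ in nhdsWithin s (Set.Ioo (0:ℝ) s), y τ = 0 := by
        filter_upwards [self_mem_nhdsWithin] with τ hτ
        exact hyIoo τ hτ
      have h1 : Filter.Tendsto y (nhdsWithin s (Set.Ioo (0:ℝ) s)) (nhds (y s)) := hcont
      have h2 : Filter.Tendsto y (nhdsWithin s (Set.Ioo (0:ℝ) s)) (nhds 0) :=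
        Filter.Tendsto.congr' (Filter.EventuallyEq.symm hev) tendsto_const_nhds
      exact tendsto_nhds_unique h1 h2
    · exact hyIoo s ⟨h0, h1⟩
  refine ⟨hyIcc, ?_⟩
  -- 0 ∈ D_F (w s) for s ∈ (0,t)
  have hmemD : ∀ s ∈ Set.Ioo (0:ℝ) t, (0 : EuclideanSpace ℝ (Fin p)) ∈ D_F (w s) := by
    intro s hs
    obtain ⟨v, hv, hyv⟩ := hy' s (Set.mem_Icc_of_Ioo hs)
    have hy'0 : y' s = 0 := by
      have hmem : Set.Ioo (0:ℝ) t ∈ nhds s := Ioo_mem_nhds hs.1 hs.2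
      have hconst : HasDerivAt y 0 s := by
        refine (hasDerivAt_const s (0 : EuclideanSpace ℝ (Fin p))).congr_of_eventuallyEq ?_
        filter_upwards [hmem] with τ hτ
        exact hyIoo τ hτ
      exact (hy s (Set.mem_Icc_of_Ioo hs)).unique hconst
    rw [hy'0, hyIoo s hs, sub_zero] at hyv
    rwa [hyv]
  -- closed graph argument: s → 0⁺
  have hwc : ContinuousWithinAt w (Set.Ioo 0 t) 0 :=
    (hw 0 (Set.left_mem_Icc.2 ht.le)).continuousAt.continuousWithinAt
  have hne : (nhdsWithin (0:ℝ) (Set.Ioo (0:ℝ) t)).NeBot := by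
    apply mem_closure_iff_nhdsWithin_neBot.1
    rw [closure_Ioo ht.ne]
    exact Set.left_mem_Icc.2 ht.le
  have htend : Filter.Tendsto (fun s => (w s, (0 : EuclideanSpace ℝ (Fin p))))
      (nhdsWithin (0:ℝ) (Set.Ioo (0:ℝ) t)) (nhds (w 0, 0)) :=
    hwc.tendsto.prodMk_nhds tendsto_const_nhds
  have hev : ∀ᶠ s in nhdsWithin (0:ℝ) (Set.Ioo (0:ℝ) t),
      (fun s => (w s, (0 : EuclideanSpace ℝ (Fin p)))) s ∈
        {q : EuclideanSpace ℝ (Fin p) × EuclideanSpace ℝ (Fin p) | q.2 ∈ D_F q.1} := by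
    filter_upwards [self_mem_nhdsWithin] with s hs
    exact hmemD s hs
  exact hclosed.mem_of_tendsto htend hev
end

section
/- Let (y_k) be a sequence in ℝᵖ satisfying y_{k+1} = (1-β_k) y_k + β_k V_{k+1} + β_k u_{k+1}, where β_k ∈ (0,1), sup_k ‖V_{k+1}‖ < ∞, and the series ∑_{i=0}^∞ β_i u_{i+1} converges. Then (y_k) is bounded. -/
open Filter

/-- Velocity boundedness: if `y_{k+1} = (1-β_k) y_k + β_k V_{k+1} + β_k u_{k+1}` with
`β_k ∈ (0,1)`, `sup_k ‖V_{k+1}‖ < ∞` and `∑ β_i u_{i+1}` converges, then `(y_k)` is bounded. -/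
theorem velocity_boundedness {p : ℕ}
    (y V u : ℕ → EuclideanSpace ℝ (Fin p)) (β : ℕ → ℝ)
    (hβ : ∀ k, β k ∈ Set.Ioo (0:ℝ) 1)
    (hrec : ∀ k, y (k + 1) = (1 - β k) • y k + β k • V (k + 1) + β k • u (k + 1))
    (hV : ∃ M : ℝ, ∀ k, ‖V (k + 1)‖ ≤ M)
    (hconv : ∃ L : EuclideanSpace ℝ (Fin p),
      Tendsto (fun n => ∑ i ∈ Finset.range n, β i • u (i + 1)) atTop (nhds L)) :
    ∃ C : ℝ, ∀ k, ‖y k‖ ≤ C := by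
  obtain ⟨M, hM⟩ := hV
  obtain ⟨L, hL⟩ := hconv
  set S : ℕ → EuclideanSpace ℝ (Fin p) :=
    fun n => ∑ i ∈ Finset.range n, β i • u (i + 1) with hS
  have hSnorm : Tendsto (fun n => ‖S n‖) atTop (nhds ‖L‖) := hL.norm
  obtain ⟨B, hB⟩ := hSnorm.bddAbove_range
  have hBmem : ∀ n, ‖S n‖ ≤ B := fun n => hB ⟨n, rfl⟩
  set w : ℕ → EuclideanSpace ℝ (Fin p) := fun k => y k - S k with hw
  set C0 : ℝ := max ‖y 0‖ (M + B) with hC0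
  have hMB : M + B ≤ C0 := le_max_right _ _
  have hwk : ∀ k, ‖w k‖ ≤ C0 := by
    intro k
    induction k with
    | zero =>
      have : w 0 = y 0 := by simp [hw, hS]
      rw [this]; exact le_max_left _ _
    | succ k ih =>
      have hSstep : S (k + 1) = S k + β k • u (k + 1) := by
        simp [hS, Finset.sum_range_succ]
      have hwstep : w (k + 1) = (1 - β k) • w k + β k • (V (k + 1) - S k) := by
        simp only [hw, hrec k, hSstep]
        module
      have hβk := hβ k
      have h1 : (0:ℝ) ≤ 1 - β k := by linarith [hβk.2]
      have h2 : (0:ℝ) ≤ β k := le_of_lt hβk.1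
      calc ‖w (k + 1)‖ ≤ ‖(1 - β k) • w k‖ + ‖β k • (V (k + 1) - S k)‖ := by
            rw [hwstep]; exact norm_add_le _ _
        _ = (1 - β k) * ‖w k‖ + β k * ‖V (k + 1) - S k‖ := by
            rw [norm_smul, norm_smul, Real.norm_eq_abs, Real.norm_eq_abs,
              abs_of_nonneg h1, abs_of_nonneg h2]
        _ ≤ (1 - β k) * C0 + β k * (M + B) := by
            have hVS : ‖V (k + 1) - S k‖ ≤ M + B :=
              (norm_sub_le _ _).trans (add_le_add (hM k) (hBmem k))
            exact add_le_add (mul_le_mul_of_nonneg_left ih h1)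
              (mul_le_mul_of_nonneg_left hVS h2)
        _ ≤ (1 - β k) * C0 + β k * C0 := by
            exact add_le_add_right (mul_le_mul_of_nonneg_left hMB h2) _
        _ = C0 := by ring
  refine ⟨C0 + B, fun k => ?_⟩
  have : y k = w k + S k := by simp [hw]
  rw [this]
  exact (norm_add_le _ _).trans (add_le_add (hwk k) (hBmem k))
end

section
/- Let F : ℝᵖ → ℝ be locally Lipschitz with conservative gradient D_F, and let (w,y) be a solution on ℝ₊ of ẇ = -ry, ẏ ∈ D_F(w) - y (r > 0) such that the trajectory stays in a compact invariant set L on which E(w,y) = F(w) + (r/2)‖y‖² attains its minimum at the initial point (w(0),y(0)). Then 0 ∈ D_F(w(0)) and y(0) = 0. -/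
open MeasureTheory
open Filter Topology Set

lemma tendsto_slope_seq {f : ℝ → ℝ} {x c : ℝ} (hf : HasDerivAt f c x) {δ : ℝ} (hδ : 0 < δ) :
    Tendsto (fun n : ℕ => (f (x + δ / (n + 1)) - f x) / (δ / (n + 1))) atTop (𝓝 c) := by
  have h0 : Tendsto (fun n : ℕ => δ / (n + 1)) atTop (𝓝 0) := by
    have := tendsto_one_div_add_atTop_nhds_zero_nat.const_mul δ
    simpa [div_eq_mul_inv] using this
  have hz : Tendsto (fun n : ℕ => x + δ / (n + 1)) atTop (𝓝[≠] x) := by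
    rw [tendsto_nhdsWithin_iff]
    constructor
    · simpa using tendsto_const_nhds.add h0
    · filter_upwards with n
      have : (0:ℝ) < δ / (n + 1) := div_pos hδ (by positivity)
      simp only [Set.mem_compl_iff, Set.mem_singleton_iff]
      intro h
      nlinarith [add_left_cancel (a := x) (b := δ/(n+1)) (c := 0) (by simpa using h)]
  have := (hasDerivAt_iff_tendsto_slope.mp hf).comp hz
  refine this.congr fun n => ?_
  simp only [Function.comp_apply, slope_def_field, add_sub_cancel_left]

/-- A solution of the heavy ball differential inclusion `ẇ = -ry`, `ẏ ∈ D_F(w) - y`. -/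
def IsHBSolution {p : ℕ}
    (D_F : EuclideanSpace ℝ (Fin p) → Set (EuclideanSpace ℝ (Fin p)))
    (r : ℝ) (w y : ℝ → EuclideanSpace ℝ (Fin p)) : Prop :=
  ∃ w' y' : ℝ → EuclideanSpace ℝ (Fin p), ∀ t ∈ Set.Ici (0:ℝ),
    HasDerivAt w (w' t) t ∧ HasDerivAt y (y' t) t ∧
    w' t = -(r • y t) ∧ ∃ v ∈ D_F (w t), y' t = v - y t

/-- If a heavy ball trajectory stays in a compact invariant set `L` on which the
energy `E(w,y) = F(w) + (r/2)‖y‖²` attains its minimum at the initial point, then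
the initial point is critical: `0 ∈ D_F(w(0))` and `y(0) = 0`. -/
theorem minimal_energy_point_is_critical {p : ℕ}
    (F : EuclideanSpace ℝ (Fin p) → ℝ)
    (D_F : EuclideanSpace ℝ (Fin p) → Set (EuclideanSpace ℝ (Fin p)))
    (hlip : LocallyLipschitz F) (r : ℝ) (hr : 0 < r)
    (hclosed : IsClosed {q : EuclideanSpace ℝ (Fin p) × EuclideanSpace ℝ (Fin p) | q.2 ∈ D_F q.1})
    (hne : ∀ x, (D_F x).Nonempty)
    (hchain : ∀ γ γ' : ℝ → EuclideanSpace ℝ (Fin p), (∀ t, HasDerivAt γ (γ' t) t) →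
      ∀ᵐ t ∂(volume : Measure ℝ), ∀ v ∈ D_F (γ t),
        HasDerivAt (fun s => F (γ s)) ((inner ℝ v (γ' t) : ℝ)) t)
    (w y : ℝ → EuclideanSpace ℝ (Fin p))
    (hsol : IsHBSolution D_F r w y)
    (L : Set (EuclideanSpace ℝ (Fin p) × EuclideanSpace ℝ (Fin p)))
    (hLcompact : IsCompact L)
    (htraj : ∀ t ≥ (0:ℝ), (w t, y t) ∈ L)
    (hinv : ∀ w₂ y₂ : ℝ → EuclideanSpace ℝ (Fin p), IsHBSolution D_F r w₂ y₂ →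
      (w₂ 0, y₂ 0) ∈ L → ∀ t ≥ (0:ℝ), (w₂ t, y₂ t) ∈ L)
    (hmin : ∀ q ∈ L, F (w 0) + (r / 2) * ‖y 0‖ ^ 2 ≤ F q.1 + (r / 2) * ‖q.2‖ ^ 2) :
    0 ∈ D_F (w 0) ∧ y 0 = 0 := by
  classical
  obtain ⟨w', y', hs⟩ := hsol
  have hw : ∀ t, 0 ≤ t → HasDerivAt w (w' t) t := fun t ht => (hs t (Set.mem_Ici.mpr ht)).1
  have hy : ∀ t, 0 ≤ t → HasDerivAt y (y' t) t := fun t ht => (hs t (Set.mem_Ici.mpr ht)).2.1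
  have hw' : ∀ t, 0 ≤ t → w' t = -(r • y t) := fun t ht => (hs t (Set.mem_Ici.mpr ht)).2.2.1
  have hv : ∀ t, 0 ≤ t → ∃ v ∈ D_F (w t), y' t = v - y t := fun t ht => (hs t (Set.mem_Ici.mpr ht)).2.2.2
  set W : ℝ → EuclideanSpace ℝ (Fin p) := fun t => if 0 ≤ t then w t else w 0 + t • w' 0 with hWdef
  set V : ℝ → EuclideanSpace ℝ (Fin p) := fun t => if 0 ≤ t then w' t else w' 0 with hVdef
  have hWeq : ∀ t, 0 ≤ t → W t = w t := fun t ht => if_pos ht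
  have hVeq : ∀ t, 0 ≤ t → V t = w' t := fun t ht => if_pos ht
  have haff : ∀ t : ℝ, HasDerivAt (fun s : ℝ => w 0 + s • w' 0) (w' 0) t := by
    intro t
    simpa using ((hasDerivAt_id t).smul_const (w' 0)).const_add (w 0)
  have hW : ∀ t, HasDerivAt W (V t) t := by
    intro t
    rcases lt_trichotomy t 0 with h | h | h
    · have hv' : V t = w' 0 := if_neg (not_le.mpr h)
      rw [hv']
      apply (haff t).congr_of_eventuallyEq
      filter_upwards [Iio_mem_nhds h] with s hs
      simp only [hWdef, if_neg (not_le.mpr (Set.mem_Iio.mp hs))]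
    · subst h
      have h1 : HasDerivWithinAt W (w' 0) (Set.Ici 0) 0 := by
        apply ((hw 0 le_rfl).hasDerivWithinAt).congr ?_ ?_
        · intro s hs; exact hWeq s (Set.mem_Ici.mp hs)
        · exact hWeq 0 le_rfl
      have h2 : HasDerivWithinAt W (w' 0) (Set.Iic 0) 0 := by
        apply ((haff 0).hasDerivWithinAt).congr ?_ ?_
        · intro s hs
          rcases eq_or_lt_of_le (Set.mem_Iic.mp hs) with h' | h'
          · subst h'; simpa using hWeq 0 le_rfl
          · simp only [hWdef, if_neg (not_le.mpr h')]
        · simpa using hWeq 0 le_rfl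
      have h3 := h2.union h1
      rw [Set.Iic_union_Ici] at h3
      have h4 := hasDerivWithinAt_univ.mp h3
      rwa [hVeq 0 le_rfl]
    · have hv' : V t = w' t := hVeq t h.le
      rw [hv']
      have : HasDerivAt w (w' t) t := hw t h.le
      apply this.congr_of_eventuallyEq
      filter_upwards [Ioi_mem_nhds h] with s hs
      exact hWeq s (le_of_lt (Set.mem_Ioi.mp hs))
  have hWcont : Continuous W := by
    have : Differentiable ℝ W := fun t => (hW t).differentiableAt
    exact this.continuous
  have hycont : ∀ t, 0 ≤ t → ContinuousAt y t := fun t ht => (hy t ht).continuousAt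
  obtain ⟨C, hC⟩ : ∃ C, ∀ z ∈ Prod.snd '' L, ‖z‖ ≤ C :=
    (hLcompact.image continuous_snd).isBounded.exists_norm_le
  have hCy : ∀ t, 0 ≤ t → ‖y t‖ ≤ C := fun t ht => hC _ ⟨_, htraj t ht, rfl⟩
  have hC0 : 0 ≤ C := le_trans (norm_nonneg _) (hCy 0 le_rfl)
  have hrC : 0 ≤ r * C := mul_nonneg hr.le hC0
  have hVbound : ∀ t, ‖V t‖ ≤ r * C := by
    intro t
    by_cases h : 0 ≤ t
    · rw [hVeq t h, hw' t h]
      rw [norm_neg, norm_smul, Real.norm_eq_abs, abs_of_pos hr]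
      exact mul_le_mul_of_nonneg_left (hCy t h) hr.le
    · have : V t = w' 0 := if_neg h
      rw [this, hw' 0 le_rfl, norm_neg, norm_smul, Real.norm_eq_abs, abs_of_pos hr]
      exact mul_le_mul_of_nonneg_left (hCy 0 le_rfl) hr.le
  set Kw : NNReal := (r * C).toNNReal with hKwdef
  have hWlip : LipschitzWith Kw W := by
    apply lipschitzWith_of_nnnorm_deriv_le (fun t => (hW t).differentiableAt)
    intro t
    rw [(hW t).deriv, ← NNReal.coe_le_coe, coe_nnnorm, hKwdef, Real.coe_toNNReal _ hrC]
    exact hVbound t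
  set h : ℝ → ℝ := fun t => F (W t) with hhdef
  have hhcont : Continuous h := hlip.continuous.comp hWcont
  set φ : ℝ → ℝ := fun x => -(r * (inner ℝ (y' x + y x) (y x) : ℝ)) with hφdef
  have hae : ∀ᵐ x ∂(volume : Measure ℝ), 0 < x → HasDerivAt h (φ x) x := by
    filter_upwards [hchain W V hW] with x hx hxpos
    obtain ⟨v, hvD, hvy⟩ := hv x hxpos.le
    have hvx : v = y' x + y x := by rw [hvy]; abel
    have h1 : HasDerivAt h ((inner ℝ v (V x) : ℝ)) x := hx v (by rw [hWeq x hxpos.le]; exact hvD)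
    have h2 : (inner ℝ v (V x) : ℝ) = φ x := by
      rw [hVeq x hxpos.le, hw' x hxpos.le, hvx, hφdef]
      rw [inner_neg_right, real_inner_smul_right]
    rwa [h2] at h1
  set Efun : ℝ → ℝ := fun t => F (w t) + (r/2) * ‖y t‖^2 with hEdef
  -- local energy identity
  have key : ∀ a, 0 ≤ a → ∃ δ > 0, ∀ b, a < b → b ≤ a + δ →
      Efun b - Efun a = -(r * ∫ x in a..b, ‖y x‖^2) := by
    intro a ha
    obtain ⟨K, U, hU, hKF⟩ := hlip (W a)
    obtain ⟨ε, hε, hball⟩ := Metric.mem_nhds_iff.mp (hWcont.continuousAt.preimage_mem_nhds hU)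
    set K' : ℝ := ((K * Kw : NNReal) : ℝ) with hK'def
    have hhl0 : LipschitzOnWith (K * Kw) (F ∘ W) (Metric.ball a ε) :=
      hKF.comp hWlip.lipschitzOnWith (fun z hz => hball hz)
    have hhl : LipschitzOnWith (K * Kw) h (Metric.ball a ε) := by
      rw [hhdef]; exact hhl0
    have hquot : ∀ u v : ℝ, u ∈ Metric.ball a ε → v ∈ Metric.ball a ε →
        |h u - h v| ≤ K' * |u - v| := by
      intro u v hu hvv
      have := hhl.dist_le_mul u hu v hvv
      rwa [Real.dist_eq, Real.dist_eq] at this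
    set δ : ℝ := ε/3 with hδdef
    have hδpos : 0 < δ := by positivity
    refine ⟨δ, hδpos, ?_⟩
    intro b hab hb
    have hmem : ∀ z, a ≤ z → z ≤ a + 2*δ → z ∈ Metric.ball a ε := by
      intro z h1 h2
      rw [Metric.mem_ball, Real.dist_eq, abs_of_nonneg (by linarith)]
      rw [hδdef] at h2; linarith
    set s : ℕ → ℝ := fun n => δ / (n+1) with hsdef
    have hs_pos : ∀ n, 0 < s n := fun n => div_pos hδpos (by positivity)
    have hs_le : ∀ n, s n ≤ δ := fun n => div_le_self hδpos.le (by push_cast; linarith [Nat.cast_nonneg (α := ℝ) n])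
    set H : ℝ → ℝ := fun u => ∫ x in a..u, h x with hHdef
    have hHd : ∀ u, HasDerivAt H (h u) u := fun u =>
      intervalIntegral.integral_hasDerivAt_right (hhcont.intervalIntegrable a u)
        (hhcont.stronglyMeasurableAtFilter _ _) hhcont.continuousAt
    have htendB : Tendsto (fun n : ℕ => (H (b + s n) - H b)/(s n)) atTop (𝓝 (h b)) :=
      tendsto_slope_seq (hHd b) hδpos
    have htendA : Tendsto (fun n : ℕ => (H (a + s n) - H a)/(s n)) atTop (𝓝 (h a)) :=
      tendsto_slope_seq (hHd a) hδpos
    have hDCT : Tendsto (fun n : ℕ => ∫ x in Set.Ioc a b, (h (x + s n) - h x)/(s n)) atTop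
        (𝓝 (∫ x in Set.Ioc a b, φ x)) := by
      apply MeasureTheory.tendsto_integral_of_dominated_convergence (fun _ => K')
      · intro n
        exact (((hhcont.comp (continuous_id.add continuous_const)).sub hhcont).div_const
          (s n)).aestronglyMeasurable
      · exact integrableOn_const measure_Ioc_lt_top.ne
      · intro n
        filter_upwards [ae_restrict_mem measurableSet_Ioc] with x hx
        have hx1 : x ∈ Metric.ball a ε := hmem x hx.1.le (by linarith [hx.2, hδpos])
        have hx2 : x + s n ∈ Metric.ball a ε := by
          apply hmem
          · linarith [hx.1, hs_pos n]
          · linarith [hx.2, hs_le n]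
        rw [Real.norm_eq_abs, abs_div, abs_of_pos (hs_pos n), div_le_iff₀ (hs_pos n)]
        calc |h (x + s n) - h x| ≤ K' * |x + s n - x| := hquot _ _ hx2 hx1
        _ = K' * s n := by rw [add_sub_cancel_left, abs_of_pos (hs_pos n)]
      · filter_upwards [ae_restrict_of_ae hae, ae_restrict_mem measurableSet_Ioc] with x hx hx2
        exact tendsto_slope_seq (hx (lt_of_le_of_lt ha hx2.1)) hδpos
    have heq : ∀ n : ℕ, ∫ x in Set.Ioc a b, (h (x + s n) - h x)/(s n)
        = (H (b + s n) - H b)/(s n) - (H (a + s n) - H a)/(s n) := by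
      intro n
      have hint1 : IntervalIntegrable (fun x => h (x + s n)) volume a b :=
        (hhcont.comp (continuous_id.add continuous_const)).intervalIntegrable _ _
      rw [← intervalIntegral.integral_of_le hab.le]
      rw [intervalIntegral.integral_div, intervalIntegral.integral_sub hint1
        (hhcont.intervalIntegrable _ _)]
      rw [intervalIntegral.integral_comp_add_right (fun x => h x) (s n)]
      have hsub : (∫ x in (a + s n)..(b + s n), h x) = H (b + s n) - H (a + s n) :=
        (intervalIntegral.integral_interval_sub_left (hhcont.intervalIntegrable a (b + s n))
          (hhcont.intervalIntegrable a (a + s n))).symm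
      rw [hsub]
      have hHa : H a = 0 := intervalIntegral.integral_same
      have hHb : H b = ∫ x in a..b, h x := rfl
      rw [hHa, ← hHb]
      field_simp
      ring
    have hlhs : Tendsto (fun n : ℕ => ∫ x in Set.Ioc a b, (h (x + s n) - h x)/(s n)) atTop
        (𝓝 (h b - h a)) := by
      apply (htendB.sub htendA).congr
      intro n
      exact (heq n).symm
    have hhba : (∫ x in Set.Ioc a b, φ x) = h b - h a := tendsto_nhds_unique hDCT hlhs
    -- integrability of φ
    have hyIoc : ContinuousOn y (Set.Ioc a b) := fun x hx =>
      (hycont x (le_trans ha hx.1.le)).continuousWithinAt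
    have hφmeas : AEStronglyMeasurable φ (volume.restrict (Set.Ioc a b)) := by
      have h1 : AEStronglyMeasurable (deriv y) (volume.restrict (Set.Ioc a b)) :=
        (stronglyMeasurable_deriv y).aestronglyMeasurable
      have h2 : AEStronglyMeasurable y (volume.restrict (Set.Ioc a b)) :=
        hyIoc.aestronglyMeasurable measurableSet_Ioc
      have h3 : AEStronglyMeasurable
          (fun x => -(r * (inner ℝ (deriv y x + y x) (y x) : ℝ)))
          (volume.restrict (Set.Ioc a b)) := (((h1.add h2).inner h2).const_mul r).neg
      apply h3.congr
      filter_upwards [ae_restrict_mem measurableSet_Ioc] with x hx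
      rw [hφdef]
      simp only
      rw [(hy x (le_trans ha hx.1.le)).deriv]
    have hφbd : ∀ᵐ x ∂(volume.restrict (Set.Ioc a b)), ‖φ x‖ ≤ K' := by
      filter_upwards [ae_restrict_of_ae hae, ae_restrict_mem measurableSet_Ioc] with x hx hx2
      have hd := hx (lt_of_le_of_lt ha hx2.1)
      have hxball : x ∈ Metric.ball a ε := hmem x hx2.1.le (by linarith [hx2.2, hδpos])
      have hball' : Metric.ball a ε ∈ 𝓝 x := Metric.isOpen_ball.mem_nhds hxball
      have hslope := (hasDerivAt_iff_tendsto_slope.mp hd).abs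
      rw [Real.norm_eq_abs]
      apply le_of_tendsto hslope
      filter_upwards [self_mem_nhdsWithin, mem_nhdsWithin_of_mem_nhds hball'] with z hz hzball
      rw [slope_def_field, abs_div, div_le_iff₀ (abs_pos.mpr (sub_ne_zero.mpr hz))]
      calc |h z - h x| ≤ K' * |z - x| := hquot z x hzball hxball
      _ = K' * |z - x| := rfl
    have hφint : IntervalIntegrable φ volume a b := by
      rw [intervalIntegrable_iff, Set.uIoc_of_le hab.le]
      apply Integrable.mono' (integrableOn_const measure_Ioc_lt_top.ne) hφmeas hφbd
    -- FTC for the inner-square part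
    have hgd : ∀ x ∈ Set.uIcc a b, HasDerivAt (fun t => (inner ℝ (y t) (y t) : ℝ))
        ((inner ℝ (y x) (y' x) : ℝ) + (inner ℝ (y' x) (y x) : ℝ)) x := by
      intro x hx
      rw [Set.uIcc_of_le hab.le] at hx
      exact (hy x (le_trans ha hx.1)).inner ℝ (hy x (le_trans ha hx.1))
    have hyyint : IntervalIntegrable (fun x => (inner ℝ (y x) (y x) : ℝ)) volume a b := by
      apply ContinuousOn.intervalIntegrable
      intro x hx
      rw [Set.uIcc_of_le hab.le] at hx
      exact ((hycont x (le_trans ha hx.1)).inner (hycont x (le_trans ha hx.1))).continuousWithinAt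
    have hgdint : IntervalIntegrable
        (fun x => (inner ℝ (y x) (y' x) : ℝ) + (inner ℝ (y' x) (y x) : ℝ)) volume a b := by
      have heq2 : ∀ x : ℝ, (inner ℝ (y x) (y' x) : ℝ) + (inner ℝ (y' x) (y x) : ℝ)
          = (-2/r) * φ x - 2 * (inner ℝ (y x) (y x) : ℝ) := by
        intro x
        rw [hφdef]
        simp only
        rw [inner_add_left, real_inner_comm (y x) (y' x)]
        field_simp
        ring
      simp only [heq2]
      exact (hφint.const_mul _).sub (hyyint.const_mul _)
    have hgFTC : (∫ x in a..b, ((inner ℝ (y x) (y' x) : ℝ) + (inner ℝ (y' x) (y x) : ℝ)))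
        = (inner ℝ (y b) (y b) : ℝ) - (inner ℝ (y a) (y a) : ℝ) :=
      intervalIntegral.integral_eq_sub_of_hasDerivAt hgd hgdint
    have hφab : (∫ x in a..b, φ x) = h b - h a := by
      rw [intervalIntegral.integral_of_le hab.le]; exact hhba
    -- combine
    have hFb : F (w b) = h b := by rw [hhdef]; simp only; rw [hWeq b (le_trans ha hab.le)]
    have hFa : F (w a) = h a := by rw [hhdef]; simp only; rw [hWeq a ha]
    have hnb : ‖y b‖^2 = (inner ℝ (y b) (y b) : ℝ) := (real_inner_self_eq_norm_sq _).symm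
    have hna : ‖y a‖^2 = (inner ℝ (y a) (y a) : ℝ) := (real_inner_self_eq_norm_sq _).symm
    have hsum : Efun b - Efun a = (∫ x in a..b, φ x)
        + (r/2) * ∫ x in a..b, ((inner ℝ (y x) (y' x) : ℝ) + (inner ℝ (y' x) (y x) : ℝ)) := by
      rw [hφab, hgFTC, hEdef]
      simp only
      rw [hFb, hFa, hnb, hna]
      ring
    rw [hsum, ← intervalIntegral.integral_const_mul,
      ← intervalIntegral.integral_add hφint (hgdint.const_mul _)]
    have hptwise : ∀ x : ℝ, φ x + (r/2) * ((inner ℝ (y x) (y' x) : ℝ) + (inner ℝ (y' x) (y x) : ℝ))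
        = -(r * ‖y x‖^2) := by
      intro x
      rw [hφdef]
      simp only
      rw [inner_add_left, real_inner_comm (y x) (y' x), real_inner_self_eq_norm_sq]
      ring
    rw [← intervalIntegral.integral_const_mul, ← intervalIntegral.integral_neg]
    apply intervalIntegral.integral_congr
    intro x _
    exact hptwise x
  -- global identity
  have hψcont : ContinuousOn (fun x => ‖y x‖^2) (Set.Ici 0) := fun t ht =>
    (((hycont t ht).norm).pow 2).continuousWithinAt
  have hψint : ∀ u v : ℝ, 0 ≤ u → 0 ≤ v → IntervalIntegrable (fun x => ‖y x‖^2) volume u v := by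
    intro u v hu hv
    apply ContinuousOn.intervalIntegrable
    apply hψcont.mono
    intro x hx
    rcases le_total u v with h' | h'
    · rw [Set.uIcc_of_le h'] at hx; exact le_trans hu hx.1
    · rw [Set.uIcc_of_ge h'] at hx; exact le_trans hv hx.1
  have hEcont : ContinuousOn Efun (Set.Ici 0) := by
    have h1 : ContinuousOn (fun t => F (w t)) (Set.Ici 0) := by
      apply (hhcont.continuousOn (s := Set.Ici 0)).congr
      intro t ht
      rw [hhdef]; simp only; rw [hWeq t ht]
    exact h1.add (continuousOn_const.mul hψcont)
  have hglobal : ∀ t, 0 ≤ t → Efun t - Efun 0 = -(r * ∫ x in (0:ℝ)..t, ‖y x‖^2) := by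
    intro b hb
    set S : Set ℝ := {t : ℝ | Efun t - Efun 0 = -(r * ∫ x in (0:ℝ)..t, ‖y x‖^2)} with hSdef
    have hsub : Set.Icc 0 b ⊆ S := by
      apply IsClosed.Icc_subset_of_forall_exists_gt
      · -- closedness
        have hP : ContinuousOn (fun t => ∫ x in Set.Ioc (0:ℝ) t, ‖y x‖^2) (Set.Icc 0 b) :=
          intervalIntegral.continuousOn_primitive
            ((hψcont.mono (Set.Icc_subset_Ici_self)).integrableOn_compact isCompact_Icc)
        have hG : ContinuousOn
            (fun t => (Efun t - Efun 0) + r * ∫ x in (0:ℝ)..t, ‖y x‖^2) (Set.Icc 0 b) := by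
          apply (((hEcont.mono Set.Icc_subset_Ici_self).sub continuousOn_const).add
            (continuousOn_const.mul (hP.congr ?_)))
          intro t ht
          exact intervalIntegral.integral_of_le ht.1
        have hSeq : S ∩ Set.Icc 0 b = Set.Icc 0 b ∩
            ((fun t => (Efun t - Efun 0) + r * ∫ x in (0:ℝ)..t, ‖y x‖^2) ⁻¹' {0}) := by
          ext t
          simp only [hSdef, Set.mem_inter_iff, Set.mem_setOf_eq, Set.mem_preimage,
            Set.mem_singleton_iff]
          constructor
          · rintro ⟨h1, h2⟩; exact ⟨h2, by linarith⟩
          · rintro ⟨h1, h2⟩; exact ⟨by linarith, h1⟩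
        rw [hSeq]
        exact hG.preimage_isClosed_of_isClosed isClosed_Icc isClosed_singleton
      · simp [hSdef]
      · intro x hx z hz
        obtain ⟨δ, hδpos, hkey⟩ := key x hx.2.1
        set u := min z (min (x+δ) b) with hudef
        have hxu : x < u := lt_min hz (lt_min (by linarith) hx.2.2)
        have huδ : u ≤ x + δ := le_trans (min_le_right _ _) (min_le_left _ _)
        have hEd := hkey u hxu huδ
        refine ⟨u, ?_, hxu, min_le_left _ _⟩
        have hadd : (∫ x' in (0:ℝ)..x, ‖y x'‖^2) + (∫ x' in x..u, ‖y x'‖^2)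
            = ∫ x' in (0:ℝ)..u, ‖y x'‖^2 :=
          intervalIntegral.integral_add_adjacent_intervals
            (hψint 0 x le_rfl hx.2.1) (hψint x u hx.2.1 (le_trans hx.2.1 hxu.le))
        have hxS : Efun x - Efun 0 = -(r * ∫ x' in (0:ℝ)..x, ‖y x'‖^2) := hx.1
        simp only [hSdef, Set.mem_setOf_eq]
        rw [← hadd, mul_add, neg_add]
        linarith
    exact hsub ⟨hb, le_rfl⟩
  have hint0 : ∀ t, 0 ≤ t → (∫ x in (0:ℝ)..t, ‖y x‖^2) = 0 := by
    intro t ht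
    have h1 : 0 ≤ ∫ x in (0:ℝ)..t, ‖y x‖^2 :=
      intervalIntegral.integral_nonneg ht (fun u _ => sq_nonneg _)
    have h2 : Efun 0 ≤ Efun t := hmin _ (htraj t ht)
    have h3 := hglobal t ht
    have h4 : r * ∫ x in (0:ℝ)..t, ‖y x‖^2 ≤ 0 := by linarith
    have h5 : 0 ≤ r * ∫ x in (0:ℝ)..t, ‖y x‖^2 := mul_nonneg hr.le h1
    have h6 : r * ∫ x in (0:ℝ)..t, ‖y x‖^2 = 0 := le_antisymm h4 h5
    exact (mul_eq_zero.mp h6).resolve_left (ne_of_gt hr)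
  have hy0 : ∀ t, 0 < t → y t = 0 := by
    intro t ht
    have hP1 : HasDerivAt (fun u => ∫ x in (0:ℝ)..u, ‖y x‖^2) (‖y t‖^2) t := by
      apply intervalIntegral.integral_hasDerivAt_right (hψint 0 t le_rfl ht.le)
      · exact ⟨Set.Ioi 0, Ioi_mem_nhds ht,
          (hψcont.mono (Set.Ioi_subset_Ici_self)).aestronglyMeasurable measurableSet_Ioi⟩
      · exact ((hycont t ht.le).norm).pow 2
    have hP2 : HasDerivAt (fun u => ∫ x in (0:ℝ)..u, ‖y x‖^2) 0 t := by
      apply (hasDerivAt_const t (0:ℝ)).congr_of_eventuallyEq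
      filter_upwards [Ioi_mem_nhds ht] with u hu
      exact hint0 u (le_of_lt hu)
    have h7 : ‖y t‖^2 = 0 := hP1.unique hP2
    have h8 : ‖y t‖ = 0 := by
      have := sq_eq_zero_iff.mp h7
      exact this
    simpa using h8
  have hy00 : y 0 = 0 := by
    have h1 : Tendsto y (𝓝[>] (0:ℝ)) (𝓝 (y 0)) := ((hycont 0 le_rfl).continuousWithinAt)
    have h2 : Tendsto y (𝓝[>] (0:ℝ)) (𝓝 0) := by
      refine Tendsto.congr' ?_ tendsto_const_nhds
      filter_upwards [self_mem_nhdsWithin] with u hu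
      exact (hy0 u hu).symm
    exact tendsto_nhds_unique h1 h2
  have hyall : ∀ t, 0 ≤ t → y t = 0 := by
    intro t ht
    rcases eq_or_lt_of_le ht with h' | h'
    · rw [← h']; exact hy00
    · exact hy0 t h'
  have hV0 : ∀ t, V t = 0 := by
    intro t
    by_cases h' : 0 ≤ t
    · rw [hVeq t h', hw' t h', hyall t h']; simp
    · have : V t = w' 0 := if_neg h'
      rw [this, hw' 0 le_rfl, hyall 0 le_rfl]; simp
  have hWconst : W 1 = W 0 :=
    is_const_of_deriv_eq_zero (fun t => (hW t).differentiableAt)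
      (fun t => by rw [(hW t).deriv, hV0]) 1 0
  have hww : w 1 = w 0 := by
    rw [← hWeq 1 zero_le_one, ← hWeq 0 le_rfl]; exact hWconst
  have hy'1 : y' 1 = 0 := by
    have h1 : HasDerivAt y 0 1 := by
      apply (hasDerivAt_const (1:ℝ) (0 : EuclideanSpace ℝ (Fin p))).congr_of_eventuallyEq
      filter_upwards [Ioi_mem_nhds (zero_lt_one (α := ℝ))] with u hu
      exact hyall u (le_of_lt hu)
    exact (hy 1 zero_le_one).unique h1
  obtain ⟨v, hvD, hvy⟩ := hv 1 zero_le_one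
  have hveq : v = 0 := by
    rw [hy'1, hyall 1 zero_le_one] at hvy
    simpa using hvy.symm
  refine ⟨?_, hy00⟩
  rw [← hww]
  exact hveq ▸ hvD
end
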